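/- Gauge transformation of the Pauli fidelities of a uniform stochastic instrument: let n, m ∈ ℕ, N := m + n, let p : Z2^n × Z2^n × V_m → ℝ with Pauli fidelities λ(x,y,Q) := Σ_{a,b,P} (-1)^{a·x + b·y + ⟨P,Q⟩} p(a,b,P), and let U_k(ρ) := Σ_{a,b,P} p(a,b,P) · (W(P) ⊗ E_{k+b,k+a}) ρ (W(P) ⊗ E_{k+b,k+a})†. Let η > 0 and ε : (Fin N → ZMod 2) → ℝ, and define the linear maps D(A) := 2^{-N} Σ_{v ∈ V_N} η^{ε(pt(v))} Tr(W(v) A) W(v) and D'(A) := 2^{-N} Σ_{v ∈ V_N} η^{-ε(pt(v))} Tr(W(v) A) W(v) on (m+n)-qubit matrices. Then for every k ∈ Z2^n and every matrix ρ: D(U_k(D'(ρ))) = 2^{-(2n+m)} Σ_{x,y ∈ Z2^n, Q ∈ V_m} (-1)^{k·(x+y)} · λ(x,y,Q) · η^{ε(pt(Q⊞y)) − ε(pt(Q⊞x))} · Tr((W(Q) ⊗ Z^x) ρ) · (W(Q) ⊗ Z^y); that is, the conjugated instrument is again a uniform stochastic instrument whose Pauli fidelities are λ(x,y,Q) ·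 η^{ε(pt(Q⊞y)) − ε(pt(Q⊞x))}. -/

import Mathlib

open Finset Matrix Kronecker

/-- `m`-qubit Pauli operators modulo phase, as pairs of X- and Z-exponents per qubit. -/
abbrev V (m : ℕ) := Fin m → ZMod 2 × ZMod 2

/-- Symplectic inner product recording (non-)commutation of Pauli operators. -/
def sympl {m : ℕ} (P Q : V m) : ZMod 2 :=
  ∑ i, ((P i).1 * (Q i).2 + (P i).2 * (Q i).1)

/-- Dot product on `Z2^n`. -/
def dot {n : ℕ} (x y : Fin n → ZMod 2) : ZMod 2 := ∑ i, x i * y i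

/-- The real sign `(-1)^z` associated with `z : ZMod 2`. -/
def sgn (z : ZMod 2) : ℝ := (-1 : ℝ) ^ z.val

/-- The Hermitian Pauli matrix labeled by `v : V n`. -/
noncomputable def W {n : ℕ} (v : V n) :
    Matrix (Fin n → ZMod 2) (Fin n → ZMod 2) ℂ := fun j k =>
  Complex.I ^ (Finset.univ.filter (fun i => (v i).1 = 1 ∧ (v i).2 = 1)).card *
    (-1 : ℂ) ^ (∑ i, (v i).2 * k i : ZMod 2).val *
    (if j = (fun i => k i + (v i).1) then 1 else 0)

/-- `Z^x`: the purely-Z Pauli matrix with Z-exponents `x`. -/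
noncomputable def Zpow {n : ℕ} (x : Fin n → ZMod 2) :
    Matrix (Fin n → ZMod 2) (Fin n → ZMod 2) ℂ :=
  W (fun i => ((0 : ZMod 2), x i))

/-- Matrices on the `(m+n)`-qubit space. -/
abbrev MatP (m n : ℕ) :=
  Matrix ((Fin m → ZMod 2) × (Fin n → ZMod 2)) ((Fin m → ZMod 2) × (Fin n → ZMod 2)) ℂ

/-- The uniform stochastic instrument with Pauli error rates `p`:
`U_k(ρ) = Σ_{a,b,P} p(a,b,P) (W(P) ⊗ E_{k+b,k+a}) ρ (W(P) ⊗ E_{k+b,k+a})†`. -/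
noncomputable def instU (n m : ℕ)
    (p : (Fin n → ZMod 2) × (Fin n → ZMod 2) × V m → ℝ)
    (k : Fin n → ZMod 2) (ρ : MatP m n) : MatP m n :=
  ∑ a : Fin n → ZMod 2, ∑ b : Fin n → ZMod 2, ∑ P : V m,
    (p (a, b, P) : ℂ) •
      ((W P ⊗ₖ Matrix.single (k + b) (k + a) (1 : ℂ)) * ρ *
        (W P ⊗ₖ Matrix.single (k + b) (k + a) (1 : ℂ))ᴴ)


/-- Pauli weight pattern: `1` on qubits where the Pauli label is non-identity. -/
def pt {N : ℕ} (v : V N) : Fin N → ZMod 2 :=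
  fun i => if v i = (0, 0) then 0 else 1

/-- `Q⊞x`: the `(m+n)`-qubit Pauli label of `Q ⊗ Z^x`. -/
def emb {m n : ℕ} (Q : V m) (x : Fin n → ZMod 2) : V (m + n) :=
  Fin.append Q (fun i => ((0 : ZMod 2), x i))

/-- The `(m+n)`-qubit Hermitian Pauli matrix labeled by `v : V (m+n)`, realized on
the product index set via the Kronecker factorization `W(v) = W(v|_m) ⊗ W(v|_n)`. -/
noncomputable def WN (m n : ℕ) (v : V (m + n)) : MatP m n :=
  W (fun i => v (Fin.castAdd n i)) ⊗ₖ W (fun i => v (Fin.natAdd m i))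

/-- The pattern-diagonal gauge map
`D(A) := 2^{-(m+n)} Σ_v η^{ε(pt v)} Tr(W(v) A) W(v)`. -/
noncomputable def Dmap (m n : ℕ) (η : ℝ) (ε : (Fin (m + n) → ZMod 2) → ℝ)
    (A : MatP m n) : MatP m n :=
  ((2 : ℂ) ^ (m + n))⁻¹ •
    ∑ v : V (m + n), ((η ^ ε (pt v) : ℝ) : ℂ) • ((WN m n v * A).trace • WN m n v)

lemma negpow_mod2 (a : ℕ) : (-1 : ℂ) ^ (a % 2) = (-1 : ℂ) ^ a := by
  conv_rhs => rw [← Nat.div_add_mod a 2]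
  rw [pow_add, pow_mul]; norm_num

lemma negpow_add (x y : ZMod 2) :
    ((-1 : ℂ)) ^ (x + y).val = (-1 : ℂ) ^ x.val * (-1 : ℂ) ^ y.val := by
  rw [ZMod.val_add, negpow_mod2, pow_add]

lemma negpow_natCast (s : ℕ) : (-1 : ℂ) ^ ((s : ZMod 2)).val = (-1 : ℂ) ^ s := by
  rw [ZMod.val_natCast, negpow_mod2]

lemma negpow_sum {ι : Type*} (s : Finset ι) (f : ι → ZMod 2) :
    (-1 : ℂ) ^ (∑ i ∈ s, f i).val = ∏ i ∈ s, (-1 : ℂ) ^ (f i).val := by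
  classical
  induction s using Finset.cons_induction with
  | empty => simp
  | cons a s ha ih => rw [Finset.sum_cons, negpow_add, ih, Finset.prod_cons]

/-- number of Y's in the label -/
def sC {n : ℕ} (v : V n) : ℕ :=
  (Finset.univ.filter (fun i => (v i).1 = 1 ∧ (v i).2 = 1)).card

lemma zdota {n : ℕ} (v : V n) : (∑ i, (v i).2 * (v i).1) = (sC v : ZMod 2) := by
  have h : ∀ a b : ZMod 2, b * a = if (a = 1 ∧ b = 1) then 1 else 0 := by decide
  rw [sC]
  rw [Finset.sum_congr rfl (fun i _ => h ((v i).1) ((v i).2))]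
  rw [Finset.sum_boole]

lemma W_apply {n : ℕ} (v : V n) (j k : Fin n → ZMod 2) :
    W v j k = Complex.I ^ (sC v) * (-1 : ℂ) ^ (∑ i, (v i).2 * k i : ZMod 2).val *
      (if j = (fun i => k i + (v i).1) then 1 else 0) := rfl

lemma W_mul_apply {n : ℕ} (u v : V n) (j k : Fin n → ZMod 2) :
    (W u * W v) j k =
      Complex.I ^ (sC u) * Complex.I ^ (sC v) *
      (-1 : ℂ) ^ (∑ i, (u i).2 * (k i + (v i).1) : ZMod 2).val *
      (-1 : ℂ) ^ (∑ i, (v i).2 * k i : ZMod 2).val *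
      (if j = (fun i => k i + (v i).1 + (u i).1) then 1 else 0) := by
  rw [Matrix.mul_apply]
  rw [Finset.sum_eq_single (fun i => k i + (v i).1)]
  · rw [W_apply, W_apply]
    rw [if_pos rfl]
    ring
  · intro l _ hl
    rw [W_apply, W_apply, if_neg hl]
    ring
  · simp

lemma sum_mul_add {n : ℕ} (z k a : Fin n → ZMod 2) :
    (∑ i, z i * (k i + a i)) = (∑ i, z i * k i) + (∑ i, z i * a i) := by
  simp [mul_add, Finset.sum_add_distrib]

lemma W_mul_self {n : ℕ} (v : V n) : W v * W v = 1 := by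
  ext j k
  rw [W_mul_apply, Matrix.one_apply]
  have hc : (fun i => k i + (v i).1 + (v i).1) = k := by
    funext i
    have : ∀ x y : ZMod 2, x + y + y = x := by decide
    exact this _ _
  rw [hc, sum_mul_add, zdota, negpow_add, negpow_natCast]
  have hA : ((-1:ℂ)^((∑ i, (v i).2 * k i : ZMod 2)).val * (-1:ℂ)^((∑ i, (v i).2 * k i : ZMod 2)).val) = 1 := by
    rw [← mul_pow]; norm_num
  have hI : (Complex.I ^ sC v * Complex.I ^ sC v * (-1:ℂ)^(sC v)) = 1 := by
    rw [← mul_pow, ← mul_pow, Complex.I_mul_I]; norm_num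
  calc Complex.I ^ sC v * Complex.I ^ sC v *
        ((-1:ℂ)^((∑ i, (v i).2 * k i : ZMod 2)).val * (-1:ℂ)^(sC v)) *
        (-1:ℂ)^((∑ i, (v i).2 * k i : ZMod 2)).val * (if j = k then 1 else 0)
      = (Complex.I ^ sC v * Complex.I ^ sC v * (-1:ℂ)^(sC v)) *
        ((-1:ℂ)^((∑ i, (v i).2 * k i : ZMod 2)).val * (-1:ℂ)^((∑ i, (v i).2 * k i : ZMod 2)).val) *
        (if j = k then 1 else 0) := by ring
    _ = if j = k then 1 else 0 := by rw [hA, hI]; ring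

lemma W_hermitian {n : ℕ} (v : V n) : (W v)ᴴ = W v := by
  ext j k
  rw [Matrix.conjTranspose_apply, W_apply, W_apply]
  by_cases h : k = fun i => j i + (v i).1
  · have h' : j = fun i => k i + (v i).1 := by
      funext i
      have hk : k i = j i + (v i).1 := congrFun h i
      have : ∀ x y : ZMod 2, x = x + y + y := by decide
      rw [hk]; exact this _ _
    rw [if_pos h, if_pos h']
    have hk2 : (∑ i, (v i).2 * k i) = (∑ i, (v i).2 * j i) + (sC v : ZMod 2) := by
      conv_lhs => rw [h]
      rw [sum_mul_add, zdota]
    rw [hk2, negpow_add, negpow_natCast]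
    simp only [mul_one, star_mul', star_pow, star_neg, star_one]
    rw [show star Complex.I = -Complex.I from Complex.conj_I]
    have hiv : (-Complex.I) ^ sC v = Complex.I ^ sC v * (-1:ℂ) ^ sC v := by
      rw [← mul_pow]; ring_nf
    rw [hiv]; ring
  · have h' : ¬ (j = fun i => k i + (v i).1) := by
      intro hj
      apply h
      funext i
      have hj' : j i = k i + (v i).1 := congrFun hj i
      have : ∀ x y : ZMod 2, x = x + y + y := by decide
      rw [hj']; exact this _ _
    rw [if_neg h, if_neg h']
    simp

lemma W_comm {m : ℕ} (P Q : V m) :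
    W P * W Q = ((-1:ℂ) ^ (sympl P Q).val) • (W Q * W P) := by
  ext j k
  rw [Matrix.smul_apply, W_mul_apply, W_mul_apply, smul_eq_mul]
  have hfn : (fun i => k i + (P i).1 + (Q i).1) = (fun i => k i + (Q i).1 + (P i).1) := by
    funext i; ring
  rw [hfn]
  have hs : sympl P Q = (∑ i, (Q i).2 * (P i).1) + (∑ i, (P i).2 * (Q i).1) := by
    rw [sympl, ← Finset.sum_add_distrib]
    refine Finset.sum_congr rfl fun i _ => ?_
    ring
  rw [hs, negpow_add]
  rw [show (∑ i, (P i).2 * (k i + (Q i).1)) = (∑ i, (P i).2 * k i) + (∑ i, (P i).2 * (Q i).1) from sum_mul_add _ _ _]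
  rw [show (∑ i, (Q i).2 * (k i + (P i).1)) = (∑ i, (Q i).2 * k i) + (∑ i, (Q i).2 * (P i).1) from sum_mul_add _ _ _]
  rw [negpow_add, negpow_add]
  have hsq : (-1:ℂ) ^ (((∑ i, (Q i).2 * (P i).1 : ZMod 2)).val * 2) = 1 := by
    rw [mul_comm, pow_mul]; norm_num
  linear_combination (-1 * Complex.I ^ sC P * Complex.I ^ sC Q *
    (-1:ℂ) ^ ((∑ i, (P i).2 * k i : ZMod 2)).val * (-1:ℂ) ^ ((∑ i, (Q i).2 * k i : ZMod 2)).val *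
    (-1:ℂ) ^ ((∑ i, (P i).2 * (Q i).1 : ZMod 2)).val *
    (if j = (fun i => k i + (Q i).1 + (P i).1) then (1:ℂ) else 0)) * hsq

lemma char_sum {n : ℕ} (w : Fin n → ZMod 2) :
    ∑ k : Fin n → ZMod 2, (-1:ℂ) ^ ((∑ i, w i * k i : ZMod 2)).val
      = if w = 0 then (2:ℂ)^n else 0 := by
  classical
  have hfac : ∀ z : ZMod 2, (∑ x : ZMod 2, (-1:ℂ) ^ ((z * x : ZMod 2)).val) = if z = 0 then 2 else 0 := by
    intro z
    have hu : (Finset.univ : Finset (ZMod 2)) = {0, 1} := by decide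
    rw [hu, Finset.sum_insert (by decide), Finset.sum_singleton]
    have h0 : ∀ x : ZMod 2, x = 0 ∨ x = 1 := by decide
    rcases h0 z with hz | hz <;> subst hz <;> norm_num [ZMod.val_one]
  calc ∑ k : Fin n → ZMod 2, (-1:ℂ) ^ ((∑ i, w i * k i : ZMod 2)).val
      = ∑ k : Fin n → ZMod 2, ∏ i, (-1:ℂ) ^ ((w i * k i : ZMod 2)).val := by
        exact Finset.sum_congr rfl fun k _ => negpow_sum _ _
    _ = ∏ i, ∑ x : ZMod 2, (-1:ℂ) ^ ((w i * x : ZMod 2)).val := by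
        rw [Finset.prod_univ_sum]
        rw [Fintype.piFinset_univ]
    _ = ∏ i, (if w i = 0 then (2:ℂ) else 0) := by
        exact Finset.prod_congr rfl fun i _ => hfac (w i)
    _ = if w = 0 then (2:ℂ)^n else 0 := by
        by_cases hw : w = 0
        · subst hw; simp [Finset.card_univ]
        · rw [if_neg hw]
          obtain ⟨i, hi⟩ := Function.ne_iff.mp hw
          exact Finset.prod_eq_zero (Finset.mem_univ i) (by simpa using hi)

lemma trace_W_mul_W {n : ℕ} (u v : V n) :
    (W u * W v).trace = if u = v then (2:ℂ)^n else 0 := by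
  classical
  rw [Matrix.trace]
  by_cases ha : ∀ i, (u i).1 = (v i).1
  · have hc : ∀ k : Fin n → ZMod 2, k = (fun i => k i + (v i).1 + (u i).1) := by
      intro k; funext i; rw [ha i]
      have : ∀ x y : ZMod 2, x = x + y + y := by decide
      exact this _ _
    have huv : (∑ i, (u i).2 * (v i).1) = (sC u : ZMod 2) := by
      rw [← zdota u]
      exact Finset.sum_congr rfl fun i _ => by rw [ha i]
    have step : ∀ k : Fin n → ZMod 2, (W u * W v).diag k =
        (Complex.I ^ sC u * Complex.I ^ sC v * (-1:ℂ) ^ (sC u)) *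
          (-1:ℂ) ^ ((∑ i, ((u i).2 + (v i).2) * k i : ZMod 2)).val := by
      intro k
      rw [Matrix.diag_apply, W_mul_apply, if_pos (hc k), sum_mul_add, huv, negpow_add,
        negpow_natCast]
      have hsum : (∑ i, ((u i).2 + (v i).2) * k i : ZMod 2)
          = (∑ i, (u i).2 * k i) + (∑ i, (v i).2 * k i) := by
        rw [← Finset.sum_add_distrib]
        refine Finset.sum_congr rfl fun i _ => ?_
        rw [add_mul]
      have hcomb : (-1:ℂ) ^ ((∑ i, (u i).2 * k i : ZMod 2)).val *
          (-1:ℂ) ^ ((∑ i, (v i).2 * k i : ZMod 2)).val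
          = (-1:ℂ) ^ ((∑ i, ((u i).2 + (v i).2) * k i : ZMod 2)).val := by
        rw [hsum, negpow_add]
      linear_combination (Complex.I ^ sC u * Complex.I ^ sC v * (-1:ℂ) ^ (sC u)) * hcomb
    simp only [step]
    rw [← Finset.mul_sum, char_sum (fun i => (u i).2 + (v i).2)]
    by_cases hz : (fun i => (u i).2 + (v i).2) = 0
    · have h20 : ∀ x y : ZMod 2, x + y = 0 → x = y := by decide
      have huv2 : u = v := by
        funext i
        exact Prod.ext (ha i) (h20 _ _ (congrFun hz i))
      subst huv2
      rw [if_pos hz, if_pos rfl]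
      have h1 : Complex.I ^ sC u * Complex.I ^ sC u * (-1:ℂ) ^ sC u = 1 := by
        rw [← mul_pow, ← mul_pow, Complex.I_mul_I]; norm_num
      rw [h1, one_mul]
    · rw [if_neg hz, mul_zero, if_neg]
      intro h
      subst h
      apply hz
      funext i
      have : ∀ x : ZMod 2, x + x = 0 := by decide
      exact this _
  · have hzero : ∀ k : Fin n → ZMod 2, (W u * W v).diag k = 0 := by
      intro k
      rw [Matrix.diag_apply, W_mul_apply, if_neg, mul_zero]
      intro h
      apply ha
      intro i
      have hxy : ∀ x a b : ZMod 2, x = x + a + b → b = a := by decide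
      exact hxy _ _ _ (congrFun h i)
    simp only [hzero]
    rw [Finset.sum_const_zero, if_neg]
    intro h
    exact ha fun i => by rw [h]

lemma stdBasis_conjT {α : Type*} [DecidableEq α] (a b : α) :
    (Matrix.single b a (1:ℂ))ᴴ = Matrix.single a b 1 := by
  ext j k
  simp [Matrix.single, Matrix.conjTranspose_apply, and_comm]

lemma kron_conjT {α β : Type*} [Fintype α] [Fintype β]
    (A : Matrix α α ℂ) (B : Matrix β β ℂ) : (A ⊗ₖ B)ᴴ = Aᴴ ⊗ₖ Bᴴ := by
  ext ⟨i, j⟩ ⟨i', j'⟩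
  simp [Matrix.conjTranspose_apply, mul_comm]

lemma E_conj_mul {α : Type*} [Fintype α] [DecidableEq α] (M : Matrix α α ℂ) (a b : α) :
    Matrix.single b a (1:ℂ) * M * Matrix.single a b 1
      = M a a • Matrix.single b b 1 := by
  ext j k
  simp [Matrix.mul_apply, Matrix.single, Finset.sum_ite_eq, ite_and, smul_eq_mul,
    Finset.mul_sum]
  aesop

lemma trace_mul_stdBasis {α : Type*} [Fintype α] [DecidableEq α] (M : Matrix α α ℂ) (j : α) :
    (M * Matrix.single j j (1:ℂ)).trace = M j j := by
  rw [Matrix.trace]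
  simp [Matrix.diag, Matrix.mul_apply, Matrix.single, ite_and]

lemma W_diag {n : ℕ} (R : V n) (a : Fin n → ZMod 2) :
    W R a a = if (fun i => (R i).1) = 0 then (-1:ℂ) ^ ((∑ i, (R i).2 * a i : ZMod 2)).val else 0 := by
  rw [W_apply]
  by_cases h : (fun i => (R i).1) = 0
  · rw [if_pos h, if_pos (by funext i; rw [show (R i).1 = 0 from congrFun h i, add_zero])]
    have hs : sC R = 0 := by
      rw [sC, Finset.card_eq_zero, Finset.filter_eq_empty_iff]
      intro i _
      rw [show (R i).1 = 0 from congrFun h i]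
      simp
    rw [hs]
    ring
  · rw [if_neg h, if_neg, mul_zero]
    intro hj
    apply h
    funext i
    have := congrFun hj i
    have hxy : ∀ x y : ZMod 2, x = x + y → y = 0 := by decide
    exact hxy _ _ this

lemma conjBWB {m n : ℕ} (P Q : V m) (R : V n) (a' b' : Fin n → ZMod 2) :
    (W P ⊗ₖ Matrix.single b' a' (1:ℂ)) * (W Q ⊗ₖ W R) *
      (W P ⊗ₖ Matrix.single b' a' (1:ℂ))ᴴ
    = ((-1:ℂ) ^ (sympl P Q).val * W R a' a') •
        (W Q ⊗ₖ Matrix.single b' b' 1) := by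
  rw [kron_conjT, W_hermitian, stdBasis_conjT, ← Matrix.mul_kronecker_mul,
    ← Matrix.mul_kronecker_mul]
  rw [W_comm P Q, Matrix.smul_mul, mul_assoc, W_mul_self, mul_one, E_conj_mul]
  rw [Matrix.smul_kronecker, Matrix.kronecker_smul, smul_smul]

def pureZ {n : ℕ} (x : Fin n → ZMod 2) : V n := fun i => ((0 : ZMod 2), x i)

lemma append_resL {m n : ℕ} (Q : V m) (R : V n) :
    (fun i => Fin.append Q R (Fin.castAdd n i)) = Q := funext (Fin.append_left Q R)

lemma append_resR {m n : ℕ} (Q : V m) (R : V n) :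
    (fun i => Fin.append Q R (Fin.natAdd m i)) = R := funext (Fin.append_right Q R)

lemma append_res {m n : ℕ} (u : V (m + n)) :
    Fin.append (fun i => u (Fin.castAdd n i)) (fun i => u (Fin.natAdd m i)) = u := by
  funext i
  refine Fin.addCases (fun j => ?_) (fun j => ?_) i
  · rw [Fin.append_left]
  · rw [Fin.append_right]

def vEquiv (m n : ℕ) : (V m × V n) ≃ V (m + n) where
  toFun p := Fin.append p.1 p.2
  invFun u := (fun i => u (Fin.castAdd n i), fun i => u (Fin.natAdd m i))
  left_inv p := by
    obtain ⟨Q, R⟩ := p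
    exact Prod.ext (append_resL Q R) (append_resR Q R)
  right_inv u := append_res u

def xEquiv (n : ℕ) : ((Fin n → ZMod 2) × (Fin n → ZMod 2)) ≃ V n where
  toFun p := fun i => (p.1 i, p.2 i)
  invFun R := (fun i => (R i).1, fun i => (R i).2)
  left_inv p := rfl
  right_inv R := rfl

lemma WN_append {m n : ℕ} (Q : V m) (R : V n) :
    WN m n (Fin.append Q R) = W Q ⊗ₖ W R := by
  unfold WN
  rw [append_resL, append_resR]

lemma WN_emb {m n : ℕ} (Q : V m) (x : Fin n → ZMod 2) :
    WN m n (emb Q x) = W Q ⊗ₖ Zpow x := WN_append Q _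

lemma Dmap_smul {m n : ℕ} (η : ℝ) (ε : (Fin (m + n) → ZMod 2) → ℝ) (c : ℂ) (A : MatP m n) :
    Dmap m n η ε (c • A) = c • Dmap m n η ε A := by
  unfold Dmap
  rw [smul_comm c]
  congr 1
  rw [Finset.smul_sum]
  refine Finset.sum_congr rfl fun v _ => ?_
  rw [Matrix.mul_smul, Matrix.trace_smul, smul_smul, smul_smul, smul_smul]
  congr 1
  rw [smul_eq_mul]
  ring

lemma Dmap_add {m n : ℕ} (η : ℝ) (ε : (Fin (m + n) → ZMod 2) → ℝ) (A B : MatP m n) :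
    Dmap m n η ε (A + B) = Dmap m n η ε A + Dmap m n η ε B := by
  unfold Dmap
  rw [← smul_add, ← Finset.sum_add_distrib]
  congr 1
  refine Finset.sum_congr rfl fun v _ => ?_
  rw [Matrix.mul_add, Matrix.trace_add, add_smul, smul_add]

lemma Dmap_zero {m n : ℕ} (η : ℝ) (ε : (Fin (m + n) → ZMod 2) → ℝ) :
    Dmap m n η ε 0 = 0 := by
  unfold Dmap
  simp

lemma Dmap_sum {m n : ℕ} (η : ℝ) (ε : (Fin (m + n) → ZMod 2) → ℝ) {ι : Type*}
    (s : Finset ι) (f : ι → MatP m n) :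
    Dmap m n η ε (∑ i ∈ s, f i) = ∑ i ∈ s, Dmap m n η ε (f i) := by
  classical
  induction s using Finset.cons_induction with
  | empty => simpa using Dmap_zero η ε
  | cons a s ha ih => rw [Finset.sum_cons, Dmap_add, ih, Finset.sum_cons]

lemma K2 {m n : ℕ} (η : ℝ) (ε : (Fin (m + n) → ZMod 2) → ℝ) (Q : V m) (j : Fin n → ZMod 2) :
    Dmap m n η ε (W Q ⊗ₖ Matrix.single j j 1) =
      ((2:ℂ)^n)⁻¹ • ∑ y : Fin n → ZMod 2,
        (((η ^ ε (pt (emb Q y)) : ℝ) : ℂ) * (-1:ℂ) ^ ((dot y j).val)) •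
          (W Q ⊗ₖ Zpow y) := by
  classical
  unfold Dmap
  rw [← Equiv.sum_comp (vEquiv m n)]
  rw [Fintype.sum_prod_type]
  simp only [vEquiv, Equiv.coe_fn_mk, WN_append]
  simp only [← Matrix.mul_kronecker_mul, Matrix.trace_kronecker, trace_W_mul_W,
    trace_mul_stdBasis]
  rw [Finset.sum_eq_single Q]
  · simp only [eq_self_iff_true, if_true]
    rw [← Equiv.sum_comp (xEquiv n), Fintype.sum_prod_type]
    simp only [xEquiv, Equiv.coe_fn_mk, W_diag]
    rw [Finset.sum_eq_single (0 : Fin n → ZMod 2)]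
    · simp only [Pi.zero_apply, if_pos (rfl : (fun _ : Fin n => (0:ZMod 2)) = 0), emb, Zpow, dot,
        pureZ]
      rw [Finset.smul_sum, Finset.smul_sum]
      refine Finset.sum_congr rfl fun x _ => ?_
      rw [smul_smul, smul_smul, smul_smul]
      congr 1
      have h2 : (2:ℂ)^m ≠ 0 := pow_ne_zero _ two_ne_zero
      have h2n : (2:ℂ)^n ≠ 0 := pow_ne_zero _ two_ne_zero
      rw [pow_add]
      field_simp
      split_ifs with hcond
      · ring
      · exact absurd (funext fun _ => rfl) hcond
    · intro rx _ hrx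
      apply Finset.sum_eq_zero
      intro rz _
      rw [if_neg (by simpa using hrx), mul_zero, zero_smul, smul_zero]
    · intro h
      exact absurd (Finset.mem_univ _) h
  · intro Q' _ hQ'
    apply Finset.sum_eq_zero
    intro R _
    rw [if_neg hQ', zero_mul, zero_smul, smul_zero]
  · intro h
    exact absurd (Finset.mem_univ Q) h

section sums
variable {M : Type*} [AddCommMonoid M] {A B C D E G : Type*}
  [Fintype A] [Fintype B] [Fintype C] [Fintype D] [Fintype E] [Fintype G]

lemma sum_comm3 (f : A → B → C → M) :
    (∑ a, ∑ b, ∑ c, f a b c) = ∑ b, ∑ c, ∑ a, f a b c := by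
  rw [Finset.sum_comm]
  exact Finset.sum_congr rfl fun b _ => Finset.sum_comm

lemma rot6 (f : A → B → C → D → E → G → M) :
    (∑ a, ∑ b, ∑ c, ∑ d, ∑ e, ∑ g, f a b c d e g)
      = ∑ b, ∑ c, ∑ d, ∑ e, ∑ g, ∑ a, f a b c d e g := by
  rw [Finset.sum_comm]
  refine Finset.sum_congr rfl fun b _ => ?_
  rw [Finset.sum_comm]
  refine Finset.sum_congr rfl fun c _ => ?_
  rw [Finset.sum_comm]
  refine Finset.sum_congr rfl fun d _ => ?_
  rw [Finset.sum_comm]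
  refine Finset.sum_congr rfl fun e _ => ?_
  rw [Finset.sum_comm]

lemma sum6_perm (f : A → B → C → D → E → G → M) :
    (∑ a, ∑ b, ∑ c, ∑ d, ∑ e, ∑ g, f a b c d e g)
      = ∑ e, ∑ g, ∑ d, ∑ a, ∑ b, ∑ c, f a b c d e g :=
  ((rot6 _).trans ((rot6 _).trans (rot6 _))).trans (sum_comm3 _)

end sums

lemma dot_comm {n : ℕ} (x y : Fin n → ZMod 2) : dot x y = dot y x := by
  simp [dot, mul_comm]

lemma dot_add_right {n : ℕ} (x k a : Fin n → ZMod 2) :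
    dot x (k + a) = dot x k + dot x a := by
  simp [dot, mul_add, Finset.sum_add_distrib]

lemma sgn_cast (z : ZMod 2) : ((sgn z : ℝ) : ℂ) = (-1:ℂ) ^ z.val := by
  rw [sgn]
  push_cast
  ring

lemma main_inner {m n : ℕ} (η : ℝ) (ε : (Fin (m + n) → ZMod 2) → ℝ)
    (c : ℝ) (P : V m) (a' b' : Fin n → ZMod 2) (ρ : MatP m n) :
    Dmap m n η ε ((c : ℂ) •
      ((W P ⊗ₖ Matrix.single b' a' (1:ℂ)) * (Dmap m n η (fun u => -ε u) ρ) *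
        (W P ⊗ₖ Matrix.single b' a' (1:ℂ))ᴴ))
    = ∑ Q : V m, ∑ x : Fin n → ZMod 2, ∑ y : Fin n → ZMod 2,
        ((((2:ℂ)^(m+n))⁻¹ * ((2:ℂ)^n)⁻¹ * (c : ℂ) *
          ((η ^ (-ε (pt (emb Q x))) : ℝ) : ℂ) * ((η ^ (ε (pt (emb Q y))) : ℝ) : ℂ) *
          (-1:ℂ) ^ ((sympl P Q).val) * (-1:ℂ) ^ ((dot x a').val) *
          (-1:ℂ) ^ ((dot y b').val) * ((W Q ⊗ₖ Zpow x) * ρ).trace) •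
          (W Q ⊗ₖ Zpow y)) := by
  classical
  have hD' : Dmap m n η (fun u => -ε u) ρ
      = ((2:ℂ)^(m+n))⁻¹ • ∑ Q : V m, ∑ R : V n,
          (((η ^ (-ε (pt (Fin.append Q R))) : ℝ) : ℂ) * ((W Q ⊗ₖ W R) * ρ).trace) •
            (W Q ⊗ₖ W R) := by
    unfold Dmap
    rw [← Equiv.sum_comp (vEquiv m n), Fintype.sum_prod_type]
    simp only [vEquiv, Equiv.coe_fn_mk, WN_append, smul_smul]
  rw [hD']
  simp only [Matrix.mul_smul, Matrix.smul_mul, Matrix.mul_sum, Matrix.sum_mul, conjBWB]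
  rw [Dmap_smul, Dmap_smul, Dmap_sum]
  simp only [Dmap_sum, Dmap_smul, K2]
  simp only [Finset.smul_sum, smul_smul]
  refine Finset.sum_congr rfl fun Q _ => ?_
  rw [← Equiv.sum_comp (xEquiv n), Fintype.sum_prod_type]
  simp only [xEquiv, Equiv.coe_fn_mk, W_diag]
  rw [Finset.sum_eq_single (0 : Fin n → ZMod 2)]
  · refine Finset.sum_congr rfl fun x _ => Finset.sum_congr rfl fun y _ => ?_
    simp only [Pi.zero_apply, Zpow, emb, dot]
    split_ifs with h
    · congr 1
      ring
    · exact absurd (funext fun _ => rfl) h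
  · intro rx _ hrx
    refine Finset.sum_eq_zero fun x _ => Finset.sum_eq_zero fun y _ => ?_
    rw [if_neg hrx]
    simp
  · intro h
    exact absurd (Finset.mem_univ _) h
/-- Gauge transformation of the Pauli fidelities of a uniform stochastic instrument:
conjugating `U_k` by the gauge maps `D, D'` yields again a uniform stochastic
instrument whose Pauli fidelities are `λ(x,y,Q) η^{ε(pt(Q⊞y)) − ε(pt(Q⊞x))}`. -/
theorem stmt_5 (n m : ℕ)
    (p : (Fin n → ZMod 2) × (Fin n → ZMod 2) × V m → ℝ)
    (lam : (Fin n → ZMod 2) → (Fin n → ZMod 2) → V m → ℝ)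
    (hlam : ∀ (x y : Fin n → ZMod 2) (Q : V m),
      lam x y Q = ∑ a : Fin n → ZMod 2, ∑ b : Fin n → ZMod 2, ∑ P : V m,
        sgn (dot a x + dot b y + sympl P Q) * p (a, b, P))
    (η : ℝ) (hη : 0 < η) (ε : (Fin (m + n) → ZMod 2) → ℝ)
    (k : Fin n → ZMod 2) (ρ : MatP m n) :
    Dmap m n η ε (instU n m p k (Dmap m n η (fun u => -ε u) ρ))
    = ((2 : ℂ) ^ (2 * n + m))⁻¹ •
        ∑ x : Fin n → ZMod 2, ∑ y : Fin n → ZMod 2, ∑ Q : V m,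
          ((sgn (dot k (x + y)) * lam x y Q *
              η ^ (ε (pt (emb Q y)) - ε (pt (emb Q x))) : ℝ) : ℂ) •
            (((W Q ⊗ₖ Zpow x) * ρ).trace • (W Q ⊗ₖ Zpow y)) := by
  classical
  simp only [instU]
  rw [Dmap_sum]
  simp only [Dmap_sum, main_inner]
  rw [sum6_perm]
  simp only [hlam, Complex.ofReal_mul, Complex.ofReal_sum, Finset.sum_mul, Finset.mul_sum,
    Finset.sum_smul, Finset.smul_sum, smul_smul]
  refine Finset.sum_congr rfl fun x _ => Finset.sum_congr rfl fun y _ =>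
    Finset.sum_congr rfl fun Q _ => Finset.sum_congr rfl fun a _ =>
    Finset.sum_congr rfl fun b _ => Finset.sum_congr rfl fun P _ => ?_
  congr 1
  have hrpow : η ^ (ε (pt (emb Q y)) - ε (pt (emb Q x)))
      = η ^ (ε (pt (emb Q y))) * η ^ (-ε (pt (emb Q x))) := by
    rw [sub_eq_add_neg, Real.rpow_add hη]
  rw [hrpow, Complex.ofReal_mul]
  simp only [sgn_cast]
  rw [dot_add_right x k a, dot_add_right y k b, dot_add_right k x y]
  simp only [negpow_add]
  rw [dot_comm k x, dot_comm k y, dot_comm a x, dot_comm b y]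
  have h2 : ((2:ℂ) ^ (2 * n + m))⁻¹ = ((2:ℂ)^(m+n))⁻¹ * ((2:ℂ)^n)⁻¹ := by
    rw [show 2*n+m = (m+n)+n from by omega, pow_add, mul_inv]
  rw [h2]
  ring
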